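/- Let w : [0,1]² → [0,1] be a Robinson graphon, and let A, B, C ⊆ [0,1] be measurable sets with A ≤ B ≤ C (i.e., a ≤ b ≤ c for all a ∈ A, b ∈ B, c ∈ C). Then ∫_A ∫_C w(x,y) dy dx ≤ ∫_B ∫_C w(x,y) dy dx and ∫_A ∫_C w(x,y) dy dx ≤ ∫_A ∫_B w(x,y) dy dx. Consequently, Λ(w) ≤ 0 restricted to such triples, i.e., the supremum defining Λ(w) over triples of equal-measure ordered sets is ≤ 0, so Λ(w) = 0 for Robinson w. -/

import Mathlib

open MeasureTheory

/-- For a Robinson graphon `w` and measurable ordered sets `A ≤ B ≤ C` in `[0,1]` of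
equal Lebesgue measure, `∫_A∫_C w ≤ ∫_B∫_C w` and `∫_A∫_C w ≤ ∫_A∫_B w`.  Consequently
each supremum in the definition of the `Λ`-statistic is `0`, so `Λ(w) = 0`. -/
lemma fin_restrict {A : Set ℝ} (hA : A ⊆ Set.Icc 0 1) :
    IsFiniteMeasure (volume.restrict A) := by
  constructor
  rw [Measure.restrict_apply_univ]
  calc volume A ≤ volume (Set.Icc (0:ℝ) 1) := measure_mono hA
    _ = 1 := by rw [Real.volume_Icc]; norm_num
    _ < ⊤ := by norm_num

lemma vol_le_one {A : Set ℝ} (hA : A ⊆ Set.Icc 0 1) : (volume A).toReal ≤ 1 := by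
  have h1 : volume A ≤ 1 := by
    calc volume A ≤ volume (Set.Icc (0:ℝ) 1) := measure_mono hA
      _ = 1 := by rw [Real.volume_Icc]; norm_num
  have := ENNReal.toReal_mono (by norm_num) h1
  simpa using this

lemma int_on {f : ℝ → ℝ} {A : Set ℝ} (hA : A ⊆ Set.Icc 0 1)
    (hfm : Measurable f) (hf01 : ∀ x, f x ∈ Set.Icc (0:ℝ) 1) :
    IntegrableOn f A := by
  have := fin_restrict hA
  refine Integrable.mono' (integrable_const 1) hfm.aestronglyMeasurable ?_
  filter_upwards with x
  rw [Real.norm_eq_abs, abs_le]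
  exact ⟨by linarith [(hf01 x).1], (hf01 x).2⟩

lemma avg_le {f g : ℝ → ℝ} {A B : Set ℝ}
    (hB : B ⊆ Set.Icc 0 1)
    (hfm : Measurable f) (hgm : Measurable g)
    (hf01 : ∀ x, f x ∈ Set.Icc (0:ℝ) 1) (hg01 : ∀ x, g x ∈ Set.Icc (0:ℝ) 1)
    (hvol : volume A = volume B)
    (h : ∀ᵐ a ∂(volume.restrict A), ∀ᵐ b ∂(volume.restrict B), f a ≤ g b) :
    ∫ a in A, f a ≤ ∫ b in B, g b := by
  have hA : A ⊆ Set.Icc 0 1 ∨ volume A = 0 → True := fun _ => trivial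
  rcases eq_or_ne (volume B) 0 with h0 | h0
  · have hA0 : volume A = 0 := hvol.trans h0
    rw [Measure.restrict_eq_zero.2 hA0, Measure.restrict_eq_zero.2 h0,
      integral_zero_measure, integral_zero_measure]
  · have hBfin := fin_restrict hB
    have hgint : IntegrableOn g B := int_on hB hgm hg01
    set mB : ℝ := (volume B).toReal with hmB
    have hmBpos : 0 < mB := by
      apply ENNReal.toReal_pos h0
      have := hBfin.measure_univ_lt_top
      rw [Measure.restrict_apply_univ] at this
      exact this.ne
    have key : ∀ᵐ a ∂(volume.restrict A), f a ≤ (∫ b in B, g b) / mB := by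
      filter_upwards [h] with a ha
      have h1 : mB * f a ≤ ∫ b in B, g b := by
        have : (∫ _ in B, f a) ≤ ∫ b in B, g b :=
          integral_mono_ae (integrable_const _) hgint ha
        rwa [setIntegral_const, smul_eq_mul] at this
      rw [le_div_iff₀ hmBpos]; linarith
    have hAfin : IsFiniteMeasure (volume.restrict A) := by
      constructor
      rw [Measure.restrict_apply_univ, hvol]
      rw [← Measure.restrict_apply_univ]
      exact hBfin.measure_univ_lt_top
    have hfint : IntegrableOn f A := by
      refine Integrable.mono' (integrable_const 1) hfm.aestronglyMeasurable ?_
      filter_upwards with x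
      rw [Real.norm_eq_abs, abs_le]
      exact ⟨by linarith [(hf01 x).1], (hf01 x).2⟩
    calc ∫ a in A, f a ≤ ∫ _ in A, (∫ b in B, g b) / mB :=
          integral_mono_ae hfint (integrable_const _) key
      _ = (volume A).toReal * ((∫ b in B, g b) / mB) := by
          rw [setIntegral_const, smul_eq_mul, measureReal_def]
      _ = ∫ b in B, g b := by
          rw [hvol, ← hmB]; field_simp

lemma ae_ne_pt {B : Set ℝ} (a : ℝ) : ∀ᵐ b ∂(volume.restrict B), b ≠ a := by
  refine ae_iff.2 ?_
  have h : {b : ℝ | ¬ b ≠ a} = {a} := by ext; simp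
  rw [h]
  rw [Measure.restrict_apply (measurableSet_singleton a)]
  refine measure_mono_null (Set.inter_subset_left) ?_
  exact Real.volume_singleton

lemma inner_mem (w : ℝ → ℝ → ℝ)
    (hrange : ∀ x y, w x y ∈ Set.Icc (0:ℝ) 1)
    {C : Set ℝ} (hCm : MeasurableSet C) (hCs : C ⊆ Set.Icc 0 1) (x : ℝ) :
    (∫ y in C, w x y) ∈ Set.Icc (0:ℝ) 1 := by
  have := fin_restrict hCs
  constructor
  · exact setIntegral_nonneg hCm fun y _ => (hrange x y).1
  · have h1 : ‖∫ y in C, w x y‖ ≤ 1 * ((volume.restrict C) Set.univ).toReal := by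
      refine norm_integral_le_of_norm_le_const (μ := volume.restrict C) ?_
      filter_upwards with y
      rw [Real.norm_eq_abs, abs_le]
      exact ⟨by linarith [(hrange x y).1], (hrange x y).2⟩
    rw [Real.norm_eq_abs] at h1
    rw [Measure.restrict_apply_univ, one_mul] at h1
    have := vol_le_one hCs
    calc (∫ y in C, w x y) ≤ |∫ y in C, w x y| := le_abs_self _
      _ ≤ (volume C).toReal := h1
      _ ≤ 1 := this

lemma part1 (w : ℝ → ℝ → ℝ)
    (hmeas : Measurable (fun p : ℝ × ℝ => w p.1 p.2))
    (hrange : ∀ x y, w x y ∈ Set.Icc (0:ℝ) 1)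
    (hrob : ∀ x z y : ℝ, 0 ≤ x → x < z → z < y → y ≤ 1 → w x y ≤ min (w x z) (w z y))
    (A B C : Set ℝ)
    (hAm : MeasurableSet A) (hBm : MeasurableSet B) (hCm : MeasurableSet C)
    (hAs : A ⊆ Set.Icc 0 1) (hBs : B ⊆ Set.Icc 0 1) (hCs : C ⊆ Set.Icc 0 1)
    (hAB : ∀ a ∈ A, ∀ b ∈ B, a ≤ b) (hBC : ∀ b ∈ B, ∀ c ∈ C, b ≤ c)
    (hv1 : volume A = volume B) (hv2 : volume B = volume C) :
    (∫ x in A, ∫ y in C, w x y) ≤ (∫ x in B, ∫ y in C, w x y) ∧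
    (∫ x in A, ∫ y in C, w x y) ≤ (∫ x in A, ∫ y in B, w x y) := by
  haveI := fin_restrict hAs; haveI := fin_restrict hBs; haveI := fin_restrict hCs
  have hwx : ∀ x : ℝ, Measurable (w x) := fun x =>
    hmeas.comp (measurable_const.prodMk measurable_id)
  have hwy : ∀ y : ℝ, Measurable (fun x => w x y) := fun y =>
    hmeas.comp (measurable_id.prodMk measurable_const)
  constructor
  · -- swap, compare, swap back
    have swapA : (∫ x in A, ∫ y in C, w x y) = ∫ y in C, ∫ x in A, w x y := by
      refine integral_integral_swap ?_
      refine Integrable.mono' (integrable_const 1) hmeas.aestronglyMeasurable ?_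
      filter_upwards with p
      show ‖w p.1 p.2‖ ≤ 1
      rw [Real.norm_eq_abs, abs_le]
      exact ⟨by linarith [(hrange p.1 p.2).1], (hrange p.1 p.2).2⟩
    have swapB : (∫ x in B, ∫ y in C, w x y) = ∫ y in C, ∫ x in B, w x y := by
      refine integral_integral_swap ?_
      refine Integrable.mono' (integrable_const 1) hmeas.aestronglyMeasurable ?_
      filter_upwards with p
      show ‖w p.1 p.2‖ ≤ 1
      rw [Real.norm_eq_abs, abs_le]
      exact ⟨by linarith [(hrange p.1 p.2).1], (hrange p.1 p.2).2⟩
    rw [swapA, swapB]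
    refine setIntegral_mono_on ?_ ?_ hCm ?_
    · refine int_on hCs ?_ ?_
      · exact (hmeas.stronglyMeasurable.integral_prod_left' (μ := volume.restrict A)).measurable
      · intro y
        exact inner_mem (fun a b => w b a) (fun a b => hrange b a) hAm hAs y
    · refine int_on hCs ?_ ?_
      · exact (hmeas.stronglyMeasurable.integral_prod_left' (μ := volume.restrict B)).measurable
      · intro y
        exact inner_mem (fun a b => w b a) (fun a b => hrange b a) hBm hBs y
    · intro y hy
      refine avg_le hBs (hwy y) (hwy y) (fun a => hrange a y) (fun b => hrange b y) hv1 ?_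
      filter_upwards [ae_restrict_mem hAm] with a ha
      filter_upwards [ae_restrict_mem hBm, ae_ne_pt a, ae_ne_pt y] with b hb hba hby
      have h1 : a < b := lt_of_le_of_ne (hAB a ha b hb) (Ne.symm hba)
      have h2 : b < y := lt_of_le_of_ne (hBC b hb y hy) hby
      exact (hrob a b y (hAs ha).1 h1 h2 (hCs hy).2).trans (min_le_right _ _)
  · refine setIntegral_mono_on ?_ ?_ hAm ?_
    · refine int_on hAs ?_ ?_
      · exact (hmeas.stronglyMeasurable.integral_prod_right' (ν := volume.restrict C)).measurable
      · intro x; exact inner_mem w hrange hCm hCs x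
    · refine int_on hAs ?_ ?_
      · exact (hmeas.stronglyMeasurable.integral_prod_right' (ν := volume.restrict B)).measurable
      · intro x; exact inner_mem w hrange hBm hBs x
    · intro x hx
      refine avg_le hBs (hwx x) (hwx x) (fun c => hrange x c) (fun b => hrange x b) hv2.symm ?_
      filter_upwards [ae_restrict_mem hCm] with c hc
      filter_upwards [ae_restrict_mem hBm, ae_ne_pt x, ae_ne_pt c] with b hb hbx hbc
      have h1 : x < b := lt_of_le_of_ne (hAB x hx b hb) (Ne.symm hbx)
      have h2 : b < c := lt_of_le_of_ne (hBC b hb c hc) hbc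
      exact (hrob x b c (hAs hx).1 h1 h2 (hCs hc).2).trans (min_le_left _ _)

lemma sSup_eq_zero' {S : Set ℝ} (h0 : (0:ℝ) ∈ S) (hb : ∀ t ∈ S, t ≤ 0) : sSup S = 0 :=
  le_antisymm (csSup_le ⟨0, h0⟩ hb) (le_csSup ⟨0, hb⟩ h0)

theorem stmt13 (w : ℝ → ℝ → ℝ)
    (hmeas : Measurable (fun p : ℝ × ℝ => w p.1 p.2))
    (hrange : ∀ x y, w x y ∈ Set.Icc (0:ℝ) 1)
    (hrob : ∀ x z y : ℝ, 0 ≤ x → x < z → z < y → y ≤ 1 → w x y ≤ min (w x z) (w z y)) :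
    (∀ A B C : Set ℝ,
      MeasurableSet A → MeasurableSet B → MeasurableSet C →
      A ⊆ Set.Icc 0 1 → B ⊆ Set.Icc 0 1 → C ⊆ Set.Icc 0 1 →
      (∀ a ∈ A, ∀ b ∈ B, a ≤ b) → (∀ b ∈ B, ∀ c ∈ C, b ≤ c) →
      volume A = volume B → volume B = volume C →
      (∫ x in A, ∫ y in C, w x y) ≤ (∫ x in B, ∫ y in C, w x y) ∧
      (∫ x in A, ∫ y in C, w x y) ≤ (∫ x in A, ∫ y in B, w x y)) ∧
    (1/2) * sSup {t : ℝ | ∃ A B C : Set ℝ,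
        MeasurableSet A ∧ MeasurableSet B ∧ MeasurableSet C ∧
        A ⊆ Set.Icc 0 1 ∧ B ⊆ Set.Icc 0 1 ∧ C ⊆ Set.Icc 0 1 ∧
        (∀ a ∈ A, ∀ b ∈ B, a ≤ b) ∧ (∀ b ∈ B, ∀ c ∈ C, b ≤ c) ∧
        volume A = volume B ∧ volume B = volume C ∧
        t = (∫ x in A, ∫ y in C, w x y) - (∫ x in B, ∫ y in C, w x y)}
    + (1/2) * sSup {t : ℝ | ∃ A B C : Set ℝ,
        MeasurableSet A ∧ MeasurableSet B ∧ MeasurableSet C ∧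
        A ⊆ Set.Icc 0 1 ∧ B ⊆ Set.Icc 0 1 ∧ C ⊆ Set.Icc 0 1 ∧
        (∀ a ∈ A, ∀ b ∈ B, a ≤ b) ∧ (∀ b ∈ B, ∀ c ∈ C, b ≤ c) ∧
        volume A = volume B ∧ volume B = volume C ∧
        t = (∫ x in A, ∫ y in C, w x y) - (∫ x in A, ∫ y in B, w x y)}
    = 0 := by
  have P1 := part1 w hmeas hrange hrob
  refine ⟨fun A B C hAm hBm hCm hAs hBs hCs hAB hBC hv1 hv2 =>
    P1 A B C hAm hBm hCm hAs hBs hCs hAB hBC hv1 hv2, ?_⟩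
  have h0mem : ∀ (F : Set ℝ → Set ℝ → Set ℝ → ℝ),
      (F ∅ ∅ ∅ = 0) →
      (0:ℝ) ∈ {t : ℝ | ∃ A B C : Set ℝ,
        MeasurableSet A ∧ MeasurableSet B ∧ MeasurableSet C ∧
        A ⊆ Set.Icc 0 1 ∧ B ⊆ Set.Icc 0 1 ∧ C ⊆ Set.Icc 0 1 ∧
        (∀ a ∈ A, ∀ b ∈ B, a ≤ b) ∧ (∀ b ∈ B, ∀ c ∈ C, b ≤ c) ∧
        volume A = volume B ∧ volume B = volume C ∧
        t = F A B C} := by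
    intro F hF
    exact ⟨∅, ∅, ∅, MeasurableSet.empty, MeasurableSet.empty, MeasurableSet.empty,
      Set.empty_subset _, Set.empty_subset _, Set.empty_subset _,
      fun a ha => absurd ha (Set.notMem_empty a),
      fun b hb => absurd hb (Set.notMem_empty b), rfl, rfl, hF.symm⟩
  have hZ : (∫ x in (∅ : Set ℝ), ∫ y in (∅ : Set ℝ), w x y) = 0 := by
    simp [Measure.restrict_empty]
  have e1 : sSup {t : ℝ | ∃ A B C : Set ℝ,
        MeasurableSet A ∧ MeasurableSet B ∧ MeasurableSet C ∧
        A ⊆ Set.Icc 0 1 ∧ B ⊆ Set.Icc 0 1 ∧ C ⊆ Set.Icc 0 1 ∧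
        (∀ a ∈ A, ∀ b ∈ B, a ≤ b) ∧ (∀ b ∈ B, ∀ c ∈ C, b ≤ c) ∧
        volume A = volume B ∧ volume B = volume C ∧
        t = (∫ x in A, ∫ y in C, w x y) - (∫ x in B, ∫ y in C, w x y)} = 0 := by
    refine sSup_eq_zero' ?_ ?_
    · exact h0mem _ (by rw [hZ]; ring)
    · rintro t ⟨A, B, C, hAm, hBm, hCm, hAs, hBs, hCs, hAB, hBC, hv1, hv2, rfl⟩
      exact sub_nonpos.2 (P1 A B C hAm hBm hCm hAs hBs hCs hAB hBC hv1 hv2).1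
  have e2 : sSup {t : ℝ | ∃ A B C : Set ℝ,
        MeasurableSet A ∧ MeasurableSet B ∧ MeasurableSet C ∧
        A ⊆ Set.Icc 0 1 ∧ B ⊆ Set.Icc 0 1 ∧ C ⊆ Set.Icc 0 1 ∧
        (∀ a ∈ A, ∀ b ∈ B, a ≤ b) ∧ (∀ b ∈ B, ∀ c ∈ C, b ≤ c) ∧
        volume A = volume B ∧ volume B = volume C ∧
        t = (∫ x in A, ∫ y in C, w x y) - (∫ x in A, ∫ y in B, w x y)} = 0 := by
    refine sSup_eq_zero' ?_ ?_
    · exact h0mem _ (by rw [hZ]; ring)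
    · rintro t ⟨A, B, C, hAm, hBm, hCm, hAs, hBs, hCs, hAB, hBC, hv1, hv2, rfl⟩
      exact sub_nonpos.2 (P1 A B C hAm hBm hCm hAs hBs hCs hAB hBC hv1 hv2).2
  rw [e1, e2]
  ring
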